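/- For the function μ(y) = (y/2)[2y − √π·erfc(y)·e^{y²}·(2y²−1)], one has lim_{y→∞} μ(y) = 1. -/

import Mathlib

open MeasureTheory Set Filter Real

/-- Complementary error function. -/
noncomputable def erfc (x : ℝ) : ℝ := (2 / Real.sqrt Real.pi) * ∫ t in Set.Ioi x, Real.exp (-t ^ 2)

/-- Bussgang gain of the SSPA: `μ(y) = (y/2)[2y − √π·erfc(y)·e^{y²}(2y²−1)]`. -/
noncomputable def muSSPA (y : ℝ) : ℝ :=
  (y / 2) * (2 * y - Real.sqrt Real.pi * erfc y * Real.exp (y ^ 2) * (2 * y ^ 2 - 1))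

lemma gauss_int (y : ℝ) : IntegrableOn (fun t : ℝ => Real.exp (-t ^ 2)) (Set.Ioi y) := by
  have := integrable_exp_neg_mul_sq (b := (1:ℝ)) one_pos
  simpa using this.integrableOn

lemma tendsto_exp_neg_sq : Tendsto (fun t : ℝ => Real.exp (-t ^ 2)) atTop (nhds 0) := by
  apply Real.tendsto_exp_atBot.comp
  exact tendsto_neg_atBot_iff.mpr (tendsto_pow_atTop two_ne_zero)

lemma deriv_negexp (x : ℝ) :
    HasDerivAt (fun t : ℝ => Real.exp (-t ^ 2)) (Real.exp (-x ^ 2) * (-(2 * x))) x := by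
  have h1 : HasDerivAt (fun t : ℝ => -t ^ 2) (-(2 * x)) x := by
    simpa using (hasDerivAt_pow 2 x).fun_neg
  exact h1.exp

lemma int_t_exp (y : ℝ) :
    ∫ t in Set.Ioi y, t * Real.exp (-t ^ 2) = Real.exp (-y ^ 2) / 2 := by
  have hderiv : ∀ x ∈ Set.Ici y,
      HasDerivAt (fun t : ℝ => -Real.exp (-t ^ 2) / 2) (x * Real.exp (-x ^ 2)) x := by
    intro x _
    have := ((deriv_negexp x).fun_neg).div_const 2
    refine this.congr_deriv ?_
    ring
  have hint : IntegrableOn (fun t : ℝ => t * Real.exp (-t ^ 2)) (Set.Ioi y) := by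
    have := integrable_mul_exp_neg_mul_sq (b := (1:ℝ)) one_pos
    simpa using this.integrableOn
  have htend : Tendsto (fun t : ℝ => -Real.exp (-t ^ 2) / 2) atTop (nhds 0) := by
    have := (tendsto_exp_neg_sq.neg).div_const 2
    simpa using this
  have := integral_Ioi_of_hasDerivAt_of_tendsto' hderiv hint htend
  rw [this]; ring

lemma J_int {y : ℝ} (hy : 0 < y) :
    IntegrableOn (fun t : ℝ => 3 / (4 * t ^ 4) * Real.exp (-t ^ 2)) (Set.Ioi y) := by
  apply Integrable.mono' ((gauss_int y).const_mul (3 / (4 * y ^ 4)))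
  · apply ContinuousOn.aestronglyMeasurable _ measurableSet_Ioi
    apply ContinuousOn.mul
    · apply ContinuousOn.div continuousOn_const (by fun_prop)
      intro t ht
      have : 0 < t := hy.trans ht
      positivity
    · fun_prop
  · filter_upwards [ae_restrict_mem measurableSet_Ioi] with t ht
    have hty : y < t := ht
    have ht0 : 0 < t := hy.trans hty
    rw [Real.norm_eq_abs, abs_of_nonneg (by positivity)]
    apply mul_le_mul_of_nonneg_right _ (Real.exp_nonneg _)
    rw [div_le_div_iff₀ (by positivity) (by positivity)]
    nlinarith [pow_le_pow_left₀ hy.le hty.le 4]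

lemma main_identity {y : ℝ} (hy : 0 < y) :
    ∫ t in Set.Ioi y, Real.exp (-t ^ 2) =
      Real.exp (-y ^ 2) * (1 / (2 * y) - 1 / (4 * y ^ 3)) +
        ∫ t in Set.Ioi y, 3 / (4 * t ^ 4) * Real.exp (-t ^ 2) := by
  set f : ℝ → ℝ := fun t => Real.exp (-t ^ 2) * (1 / (4 * t ^ 3) - 1 / (2 * t)) with hf
  have hderiv : ∀ x ∈ Set.Ici y, HasDerivAt f
      (Real.exp (-x ^ 2) - 3 / (4 * x ^ 4) * Real.exp (-x ^ 2)) x := by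
    intro x hx
    have hx0 : 0 < x := lt_of_lt_of_le hy hx
    have d1 : HasDerivAt (fun t : ℝ => 4 * t ^ 3) (4 * (3 * x ^ 2)) x :=
      (hasDerivAt_pow 3 x).const_mul 4
    have d2 : HasDerivAt (fun t : ℝ => 2 * t) 2 x := by
      simpa using (hasDerivAt_id x).const_mul 2
    have d1' : HasDerivAt (fun t : ℝ => 4 * t ^ 3) (12 * x ^ 2) x := by
      convert d1 using 1; ring
    have A := (deriv_negexp x).div d1' (by positivity)
    have B := (deriv_negexp x).div d2 (by positivity)
    have C : HasDerivAt (fun t : ℝ => Real.exp (-t ^ 2) / (4 * t ^ 3) - Real.exp (-t ^ 2) / (2 * t))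
        (_ - _) x := A.sub B
    have heq : f = fun t : ℝ => Real.exp (-t ^ 2) / (4 * t ^ 3) - Real.exp (-t ^ 2) / (2 * t) := by
      funext t
      simp only [hf]
      ring
    rw [heq]
    convert C using 1
    field_simp
    ring
  have hint : IntegrableOn
      (fun x : ℝ => Real.exp (-x ^ 2) - 3 / (4 * x ^ 4) * Real.exp (-x ^ 2)) (Set.Ioi y) :=
    (gauss_int y).sub (J_int hy)
  have htend : Tendsto f atTop (nhds 0) := by
    have h1 : Tendsto (fun t : ℝ => 1 / (4 * t ^ 3) - 1 / (2 * t)) atTop (nhds 0) := by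
      have a1 : Tendsto (fun t : ℝ => 1 / (4 * t ^ 3)) atTop (nhds 0) := by
        simp only [one_div]
        apply Filter.Tendsto.inv_tendsto_atTop
        exact (tendsto_pow_atTop three_ne_zero).const_mul_atTop (by norm_num)
      have a2 : Tendsto (fun t : ℝ => 1 / (2 * t)) atTop (nhds 0) := by
        simp only [one_div]
        apply Filter.Tendsto.inv_tendsto_atTop
        exact tendsto_id.const_mul_atTop (by norm_num)
      simpa using a1.sub a2
    have := tendsto_exp_neg_sq.mul h1
    rw [mul_zero] at this
    exact this
  have key := integral_Ioi_of_hasDerivAt_of_tendsto' hderiv hint htend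
  rw [integral_sub (gauss_int y) (J_int hy)] at key
  have : f y = Real.exp (-y ^ 2) * (1 / (4 * y ^ 3) - 1 / (2 * y)) := rfl
  rw [this] at key
  linarith [key]

lemma J_nonneg {y : ℝ} (hy : 0 < y) :
    0 ≤ ∫ t in Set.Ioi y, 3 / (4 * t ^ 4) * Real.exp (-t ^ 2) := by
  apply setIntegral_nonneg measurableSet_Ioi
  intro t ht
  have : 0 < t := hy.trans ht
  positivity

lemma J_bound {y : ℝ} (hy : 0 < y) :
    (∫ t in Set.Ioi y, 3 / (4 * t ^ 4) * Real.exp (-t ^ 2)) ≤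
      3 / (8 * y ^ 5) * Real.exp (-y ^ 2) := by
  have h1 : (∫ t in Set.Ioi y, 3 / (4 * t ^ 4) * Real.exp (-t ^ 2)) ≤
      ∫ t in Set.Ioi y, 3 / (4 * y ^ 5) * (t * Real.exp (-t ^ 2)) := by
    apply setIntegral_mono_on (J_int hy)
    · have := int_t_exp y
      have hint : IntegrableOn (fun t : ℝ => t * Real.exp (-t ^ 2)) (Set.Ioi y) := by
        have := integrable_mul_exp_neg_mul_sq (b := (1:ℝ)) one_pos
        simpa using this.integrableOn
      exact hint.const_mul _
    · exact measurableSet_Ioi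
    · intro t ht
      have hty : y < t := ht
      have ht0 : 0 < t := hy.trans hty
      rw [mul_comm (3 / (4 * y ^ 5)) _, mul_comm _ (Real.exp (-t ^ 2)),
          mul_comm t (Real.exp (-t ^ 2)), mul_assoc]
      apply mul_le_mul_of_nonneg_left _ (Real.exp_nonneg _)
      rw [div_le_iff₀ (by positivity)]
      have h5 : y ^ 5 ≤ t ^ 5 := pow_le_pow_left₀ hy.le hty.le 5
      have e : t * (3 / (4 * y ^ 5)) * (4 * t ^ 4) = 3 * (t ^ 5 / y ^ 5) := by
        field_simp
      have h6 : (1:ℝ) ≤ t ^ 5 / y ^ 5 := (one_le_div (by positivity)).mpr h5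
      rw [e]; linarith
  rw [MeasureTheory.integral_const_mul, int_t_exp y] at h1
  calc (∫ t in Set.Ioi y, 3 / (4 * t ^ 4) * Real.exp (-t ^ 2))
      ≤ 3 / (4 * y ^ 5) * (Real.exp (-y ^ 2) / 2) := h1
    _ = 3 / (8 * y ^ 5) * Real.exp (-y ^ 2) := by ring

lemma mu_eq {y : ℝ} (hy : 0 < y) :
    muSSPA y = 1 - 1 / (4 * y ^ 2) -
      y * (2 * y ^ 2 - 1) * Real.exp (y ^ 2) *
        ∫ t in Set.Ioi y, 3 / (4 * t ^ 4) * Real.exp (-t ^ 2) := by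
  have hs : Real.sqrt Real.pi ≠ 0 := by
    positivity
  have hE : Real.exp (y ^ 2) * Real.exp (-y ^ 2) = 1 := by
    rw [← Real.exp_add]; simp
  unfold muSSPA erfc
  rw [main_identity hy]
  set J := ∫ t in Set.Ioi y, 3 / (4 * t ^ 4) * Real.exp (-t ^ 2)
  have hy0 : y ≠ 0 := hy.ne'
  rw [Real.exp_neg (y ^ 2)]
  set E := Real.exp (y ^ 2) with hEdef
  have hE0 : E ≠ 0 := Real.exp_ne_zero _
  field_simp
  ring

lemma lower_aux {y E J : ℝ} (hy : 1 ≤ y) (hE0 : 0 < E) (hJ0 : 0 ≤ J)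
    (hJb : J ≤ 3 / (8 * y ^ 5) * E⁻¹) :
    1 - 1 / y ^ 2 ≤ 1 - 1 / (4 * y ^ 2) - y * (2 * y ^ 2 - 1) * E * J := by
  have hy0 : 0 < y := lt_of_lt_of_le one_pos hy
  have hEJ : E * J ≤ 3 / (8 * y ^ 5) := by
    calc E * J ≤ E * (3 / (8 * y ^ 5) * E⁻¹) := mul_le_mul_of_nonneg_left hJb hE0.le
      _ = 3 / (8 * y ^ 5) := by field_simp
  have hEJ8 : E * J * (8 * y ^ 5) ≤ 3 := by
    rw [← le_div_iff₀ (by positivity)]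
    exact hEJ
  have hy3s : 0 ≤ y ^ 3 * (E * J) := by positivity
  have key : y * (2 * y ^ 2 - 1) * E * J ≤ 3 / (4 * y ^ 2) := by
    rw [le_div_iff₀ (by positivity)]
    nlinarith [hEJ8, hy3s]
  have hsplit : (1:ℝ) / y ^ 2 = 1 / (4 * y ^ 2) + 3 / (4 * y ^ 2) := by ring
  linarith

lemma upper_aux {y E J : ℝ} (hy : 1 ≤ y) (hE0 : 0 < E) (hJ0 : 0 ≤ J) :
    1 - 1 / (4 * y ^ 2) - y * (2 * y ^ 2 - 1) * E * J ≤ 1 := by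
  have hy0 : 0 < y := lt_of_lt_of_le one_pos hy
  have hS : 0 ≤ y * (2 * y ^ 2 - 1) * E * J := by
    apply mul_nonneg _ hJ0
    apply mul_nonneg _ hE0.le
    apply mul_nonneg hy0.le
    nlinarith
  have h4 : 0 ≤ 1 / (4 * y ^ 2) := by positivity
  linarith

/-- Ideal-amplifier limit: `μ(y) → 1` as `y → ∞`. -/
theorem stmt11 : Filter.Tendsto muSSPA Filter.atTop (nhds 1) := by
  have hlim : Tendsto (fun y : ℝ => 1 - 1 / y ^ 2) atTop (nhds 1) := by
    have h0 : Tendsto (fun y : ℝ => 1 / y ^ 2) atTop (nhds 0) := by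
      simp only [one_div]
      exact (tendsto_pow_atTop two_ne_zero).inv_tendsto_atTop
    have := (tendsto_const_nhds (x := (1:ℝ)) (f := atTop)).sub h0
    simpa using this
  apply tendsto_of_tendsto_of_tendsto_of_le_of_le' hlim tendsto_const_nhds
  · filter_upwards [eventually_ge_atTop (1:ℝ)] with y hy
    have hy0 : 0 < y := lt_of_lt_of_le one_pos hy
    have hJb := J_bound hy0
    rw [Real.exp_neg] at hJb
    rw [mu_eq hy0]
    exact lower_aux hy (Real.exp_pos _) (J_nonneg hy0) hJb
  · filter_upwards [eventually_ge_atTop (1:ℝ)] with y hy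
    have hy0 : 0 < y := lt_of_lt_of_le one_pos hy
    rw [mu_eq hy0]
    exact upper_aux hy (Real.exp_pos _) (J_nonneg hy0)
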